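/- The free product of two nontrivial groups, at least one of which has order greater than 2, contains a nonabelian free subgroup. -/

import Mathlib

universe u v

open Monoid CoprodI Pointwise

namespace FreeSubgroupAux

variable {ι : Type*} {M : ι → Type*} [∀ i, Monoid (M i)] [DecidableEq ι] [∀ i, DecidableEq (M i)]
variable {G : ι → Type*} [∀ i, Group (G i)] [∀ i, DecidableEq (G i)]

theorem fstIdx_cons_ne {k j : ι} {m : M k} {w : Word M} {h1 h2} (hkj : k ≠ j) :
    (Word.cons m w h1 h2).fstIdx ≠ some j := by
  rw [Word.fstIdx_cons]
  exact fun h => hkj (Option.some.inj h)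

theorem fstIdx_empty_ne {j : ι} : (Word.empty : Word M).fstIdx ≠ some j := by
  simp [Word.fstIdx, Word.empty]

theorem of_smul_cons_merge {i} (m m' : M i) (w : Word M) (h1 : w.fstIdx ≠ some i) (h2 : m' ≠ 1)
    (h : m * m' ≠ 1) :
    CoprodI.of m • (Word.cons m' w h1 h2) = Word.cons (m * m') w h1 h := by
  have hp : Word.equivPair i (Word.cons m' w h1 h2) = ⟨m', w, h1⟩ := by
    apply (Word.equivPair i).apply_eq_iff_eq_symm_apply.mpr
    rw [Word.equivPair_symm, Word.rcons, dif_neg h2]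
  rw [Word.of_smul_def, hp]
  show Word.rcons ⟨m * m', w, h1⟩ = _
  rw [Word.rcons, dif_neg h]

variable {G : ι → Type*} [∀ i, Group (G i)] [∀ i, DecidableEq (G i)]

theorem of_smul_cons_cancel {i} (m m' : G i) (w : Word G) (h1 : w.fstIdx ≠ some i) (h2 : m' ≠ 1)
    (h : m * m' = 1) :
    CoprodI.of m • (Word.cons m' w h1 h2) = w := by
  rw [Word.cons_eq_smul, smul_smul, ← map_mul, h, map_one, one_smul]

theorem key {i j : ι} (hij : i ≠ j) (p r : G i) (q s : G j)
    (hp : p ≠ 1) (hq : q ≠ 1) (hr : r ≠ 1) (hs : s ≠ 1)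
    (w : Word G) (hw : w.toList.take 2 ≠ [⟨j, s⁻¹⟩, ⟨i, r⁻¹⟩]) :
    ((CoprodI.of p * CoprodI.of q * CoprodI.of r * CoprodI.of s) • w).toList.take 2
      = [⟨i, p⟩, ⟨j, q⟩] := by
  have hmain : ∃ (u : Word G) (hu : u.fstIdx ≠ some j),
      (CoprodI.of q * CoprodI.of r * CoprodI.of s) • w = Word.cons q u hu hq := by
    rw [mul_smul, mul_smul]
    induction w using Word.consRecOn with
    | empty =>
      rw [← Word.cons_eq_smul (m := s) (h1 := fstIdx_empty_ne) (h2 := hs),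
        ← Word.cons_eq_smul (m := r) (h1 := fstIdx_cons_ne hij.symm) (h2 := hr)]
      exact ⟨_, fstIdx_cons_ne hij,
        (Word.cons_eq_smul (h1 := fstIdx_cons_ne hij) (h2 := hq)).symm⟩
    | cons k m t h1 h2 _ =>
      by_cases hkj : k = j
      · subst hkj
        by_cases hsm : s * m = 1
        · rw [of_smul_cons_cancel s m t h1 h2 hsm]
          induction t using Word.consRecOn with
          | empty =>
            rw [← Word.cons_eq_smul (m := r) (h1 := fstIdx_empty_ne) (h2 := hr)]
            exact ⟨_, fstIdx_cons_ne hij,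
              (Word.cons_eq_smul (h1 := fstIdx_cons_ne hij) (h2 := hq)).symm⟩
          | cons k' m' t' h1' h2' _ =>
            by_cases hki : k' = i
            · subst hki
              by_cases hrm : r * m' = 1
              · exfalso
                apply hw
                have hm : m = s⁻¹ := eq_inv_of_mul_eq_one_right hsm
                have hm' : m' = r⁻¹ := eq_inv_of_mul_eq_one_right hrm
                simp [Word.cons, hm, hm']
              · rw [of_smul_cons_merge r m' t' h1' h2' hrm]
                exact ⟨_, fstIdx_cons_ne hij,
                  (Word.cons_eq_smul (h1 := fstIdx_cons_ne hij) (h2 := hq)).symm⟩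
            · rw [← Word.cons_eq_smul (m := r)
                (h1 := fstIdx_cons_ne hki) (h2 := hr)]
              exact ⟨_, fstIdx_cons_ne hij,
                (Word.cons_eq_smul (h1 := fstIdx_cons_ne hij) (h2 := hq)).symm⟩
        · rw [of_smul_cons_merge s m t h1 h2 hsm,
            ← Word.cons_eq_smul (m := r) (h1 := fstIdx_cons_ne hij.symm) (h2 := hr)]
          exact ⟨_, fstIdx_cons_ne hij,
            (Word.cons_eq_smul (h1 := fstIdx_cons_ne hij) (h2 := hq)).symm⟩
      · rw [← Word.cons_eq_smul (m := s)
          (h1 := fstIdx_cons_ne hkj) (h2 := hs),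
          ← Word.cons_eq_smul (m := r) (h1 := fstIdx_cons_ne hij.symm) (h2 := hr)]
        exact ⟨_, fstIdx_cons_ne hij,
          (Word.cons_eq_smul (h1 := fstIdx_cons_ne hij) (h2 := hq)).symm⟩
  obtain ⟨u, hu, hqu⟩ := hmain
  have hx : (CoprodI.of p * CoprodI.of q * CoprodI.of r * CoprodI.of s) • w
      = CoprodI.of p • ((CoprodI.of q * CoprodI.of r * CoprodI.of s) • w) := by
    rw [← mul_smul, mul_assoc, mul_assoc, mul_assoc]
  rw [hx, hqu,
    ← Word.cons_eq_smul (m := p) (h1 := fstIdx_cons_ne hij.symm) (h2 := hp)]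
  simp [Word.cons]


abbrev Fam (A B : Type u) : Bool → Type u := fun t => cond t A B

instance {A B : Type u} [Group A] [Group B] (t : Bool) : Group (Fam A B t) := by
  cases t
  · exact ‹Group B›
  · exact ‹Group A›

theorem aux {A B : Type u} [Group A] [Group B] [Nontrivial B]
    (a a' : A) (ha : a ≠ 1) (ha' : a' ≠ 1) (haa : a ≠ a') :
    ∃ f : FreeGroup (Fin 2) →* Monoid.Coprod A B, Function.Injective f := by
  classical
  obtain ⟨b, hb⟩ := exists_ne (1 : B)
  let oA : A →* CoprodI (Fam A B) := CoprodI.of (M := Fam A B) (i := true)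
  let oB : B →* CoprodI (Fam A B) := CoprodI.of (M := Fam A B) (i := false)
  let x : CoprodI (Fam A B) := oA a * oB b * oA a' * oB b
  let y : CoprodI (Fam A B) := oA a' * oB b * oA a * oB b
  let S : (Σ t, Fam A B t) → (Σ t, Fam A B t) → Set (Word (Fam A B)) :=
    fun u v => {w | w.toList.take 2 = [u, v]}
  have hdisj : ∀ u v u' v' : (Σ t, Fam A B t), (u ≠ u' ∨ v ≠ v') →
      Disjoint (S u v) (S u' v') := by
    intro u v u' v' h
    rw [Set.disjoint_left]
    intro w hw hw'
    rw [Set.mem_setOf_eq] at hw hw'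
    rw [hw] at hw'
    rcases h with h | h <;> simp_all
  let X : Fin 2 → Set (Word (Fam A B)) :=
    ![S ⟨true, a⟩ ⟨false, b⟩, S ⟨true, a'⟩ ⟨false, b⟩]
  let Y : Fin 2 → Set (Word (Fam A B)) :=
    ![S ⟨false, b⁻¹⟩ ⟨true, a'⁻¹⟩, S ⟨false, b⁻¹⟩ ⟨true, a⁻¹⟩]
  have hb' : b⁻¹ ≠ 1 := inv_ne_one.mpr hb
  have hXnonempty : ∀ i, (X i).Nonempty := by
    have hmem : ∀ (c : A) (hc : c ≠ 1), (⟨[⟨true, c⟩, ⟨false, b⟩],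
        by rintro l hl; simp only [List.mem_cons, List.mem_singleton] at hl
           rcases hl with rfl | rfl | h; exact hc; exact hb; simp at h,
        by simp⟩ : Word (Fam A B)) ∈ S ⟨true, c⟩ ⟨false, b⟩ := by
      intro c hc
      simp [S]
    intro i
    fin_cases i
    · exact ⟨_, hmem a ha⟩
    · exact ⟨_, hmem a' ha'⟩
  have hXdisj : Pairwise (Function.onFun Disjoint X) := by
    have h01 : Disjoint (X 0) (X 1) := hdisj _ _ _ _ (Or.inl (by simp [haa]))
    intro i j hij
    fin_cases i <;> fin_cases j
    · exact absurd rfl hij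
    · exact h01
    · exact h01.symm
    · exact absurd rfl hij
  have hYdisj : Pairwise (Function.onFun Disjoint Y) := by
    have h01 : Disjoint (Y 0) (Y 1) := hdisj _ _ _ _ (Or.inr (by simp [Ne.symm haa]))
    intro i j hij
    fin_cases i <;> fin_cases j
    · exact absurd rfl hij
    · exact h01
    · exact h01.symm
    · exact absurd rfl hij
  have hXYdisj : ∀ i j, Disjoint (X i) (Y j) := by
    intro i j
    fin_cases i <;> fin_cases j <;> apply hdisj <;> left <;> simp
  have htf : (true : Bool) ≠ false := by decide
  have hX0 : x • (Y 0)ᶜ ⊆ X 0 := by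
    rintro _ ⟨w, hw, rfl⟩
    have hw' : w.toList.take 2 ≠ [⟨false, b⁻¹⟩, ⟨true, a'⁻¹⟩] := hw
    have hk := key (ι := Bool) (G := Fam A B) (i := true) (j := false)
      htf a a' b b ha hb ha' hb w hw'
    show (x • w).toList.take 2 = [⟨true, a⟩, ⟨false, b⟩]
    show ((oA a * oB b * oA a' * oB b) • w).toList.take 2 = [⟨true, a⟩, ⟨false, b⟩]
    exact hk
  have hX1 : y • (Y 1)ᶜ ⊆ X 1 := by
    rintro _ ⟨w, hw, rfl⟩
    have hw' : w.toList.take 2 ≠ [⟨false, b⁻¹⟩, ⟨true, a⁻¹⟩] := hw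
    have hk := key (ι := Bool) (G := Fam A B) (i := true) (j := false)
      htf a' a b b ha' hb ha hb w hw'
    show (y • w).toList.take 2 = [⟨true, a'⟩, ⟨false, b⟩]
    show ((oA a' * oB b * oA a * oB b) • w).toList.take 2 = [⟨true, a'⟩, ⟨false, b⟩]
    exact hk
  have hX : ∀ i, (![x, y] i) • (Y i)ᶜ ⊆ X i := by
    intro i
    fin_cases i
    · exact hX0
    · exact hX1
  have hxinv : x⁻¹ = oB b⁻¹ * oA a'⁻¹ * oB b⁻¹ * oA a⁻¹ := by
    simp [x, oA, oB, mul_assoc]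
  have hyinv : y⁻¹ = oB b⁻¹ * oA a⁻¹ * oB b⁻¹ * oA a'⁻¹ := by
    simp [y, oA, oB, mul_assoc]
  have hY0 : x⁻¹ • (X 0)ᶜ ⊆ Y 0 := by
    rintro _ ⟨w, hw, rfl⟩
    have hw' : w.toList.take 2 ≠ [⟨true, a⟩, ⟨false, b⟩] := hw
    have hw'' : w.toList.take 2 ≠ [⟨true, (a⁻¹)⁻¹⟩, ⟨false, (b⁻¹)⁻¹⟩] := by
      simpa using hw'
    have hk := key (ι := Bool) (G := Fam A B) (i := false) (j := true)
      htf.symm b⁻¹ b⁻¹ a'⁻¹ a⁻¹ hb' (inv_ne_one.mpr ha') hb' (inv_ne_one.mpr ha) w hw''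
    show (x⁻¹ • w).toList.take 2 = [⟨false, b⁻¹⟩, ⟨true, a'⁻¹⟩]
    rw [hxinv]
    exact hk
  have hY1 : y⁻¹ • (X 1)ᶜ ⊆ Y 1 := by
    rintro _ ⟨w, hw, rfl⟩
    have hw' : w.toList.take 2 ≠ [⟨true, a'⟩, ⟨false, b⟩] := hw
    have hw'' : w.toList.take 2 ≠ [⟨true, (a'⁻¹)⁻¹⟩, ⟨false, (b⁻¹)⁻¹⟩] := by
      simpa using hw'
    have hk := key (ι := Bool) (G := Fam A B) (i := false) (j := true)
      htf.symm b⁻¹ b⁻¹ a⁻¹ a'⁻¹ hb' (inv_ne_one.mpr ha) hb' (inv_ne_one.mpr ha') w hw''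
    show (y⁻¹ • w).toList.take 2 = [⟨false, b⁻¹⟩, ⟨true, a⁻¹⟩]
    rw [hyinv]
    exact hk
  have hY : ∀ i, (![x, y]⁻¹ i) • (X i)ᶜ ⊆ Y i := by
    intro i
    fin_cases i
    · exact hY0
    · exact hY1
  have hfree := FreeGroup.injective_lift_of_ping_pong (ι := ULift.{u} (Fin 2))
    (G := CoprodI (Fam A B)) (α := Word (Fam A B))
    (a := fun i => ![x, y] i.down) (X := fun i => X i.down) (Y := fun i => Y i.down)
    (fun i => hXnonempty i.down)
    (fun i j hij => hXdisj (fun h => hij (ULift.down_injective h)))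
    (fun i j hij => hYdisj (fun h => hij (ULift.down_injective h)))
    (fun i j => hXYdisj i.down j.down)
    (fun i => hX i.down) (fun i => hY i.down)
  let e₁ : Monoid.Coprod A B →* CoprodI (Fam A B) := Coprod.lift oA oB
  let e₂ : CoprodI (Fam A B) →* Monoid.Coprod A B :=
    CoprodI.lift (fun t => Bool.rec (motive := fun t => Fam A B t →* Monoid.Coprod A B)
      Coprod.inr Coprod.inl t)
  have hleft : e₁.comp e₂ = MonoidHom.id _ := by
    apply CoprodI.ext_hom
    intro t
    cases t <;> ext m <;>
      simp only [MonoidHom.comp_apply, MonoidHom.id_apply, CoprodI.lift_of, e₁, e₂, oA, oB] <;>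
      first
        | exact Coprod.lift_apply_inr _ _ m
        | exact Coprod.lift_apply_inl _ _ m
  have hinj₂ : Function.Injective e₂ := by
    intro u v huv
    have h1 := DFunLike.congr_fun hleft u
    have h2 := DFunLike.congr_fun hleft v
    simp only [MonoidHom.coe_comp, Function.comp_apply, MonoidHom.id_apply] at h1 h2
    rw [← h1, ← h2, huv]
  refine ⟨(e₂.comp (FreeGroup.lift fun i : ULift.{u} (Fin 2) => ![x, y] i.down)).comp
    (FreeGroup.freeGroupCongr (Equiv.ulift.symm : Fin 2 ≃ ULift.{u} (Fin 2))).toMonoidHom, ?_⟩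
  exact (hinj₂.comp hfree).comp (FreeGroup.freeGroupCongr Equiv.ulift.symm).injective


theorem aux₂ {A : Type u} {B : Type v} [Group A] [Group B] [Nontrivial B]
    (a a' : A) (ha : a ≠ 1) (ha' : a' ≠ 1) (haa : a ≠ a') :
    ∃ f : FreeGroup (Fin 2) →* Monoid.Coprod A B, Function.Injective f := by
  obtain ⟨f, hf⟩ := aux (A := ULift.{v} A) (B := ULift.{u} B)
    (ULift.up a) (ULift.up a')
    (fun hh => ha (congrArg ULift.down hh))
    (fun hh => ha' (congrArg ULift.down hh))
    (fun hh => haa (congrArg ULift.down hh))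
  let m : Monoid.Coprod (ULift.{v} A) (ULift.{u} B) →* Monoid.Coprod A B :=
    Coprod.map MulEquiv.ulift.toMonoidHom MulEquiv.ulift.toMonoidHom
  let m' : Monoid.Coprod A B →* Monoid.Coprod (ULift.{v} A) (ULift.{u} B) :=
    Coprod.map MulEquiv.ulift.symm.toMonoidHom MulEquiv.ulift.symm.toMonoidHom
  have hA : (MulEquiv.ulift (α := A)).symm.toMonoidHom.comp
      (MulEquiv.ulift (α := A)).toMonoidHom = MonoidHom.id _ := by
    ext u; rfl
  have hB : (MulEquiv.ulift (α := B)).symm.toMonoidHom.comp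
      (MulEquiv.ulift (α := B)).toMonoidHom = MonoidHom.id _ := by
    ext u; rfl
  have hid : ∀ z : Monoid.Coprod (ULift.{v} A) (ULift.{u} B), m' (m z) = z := by
    intro z
    show Coprod.map _ _ (Coprod.map _ _ z) = z
    rw [Coprod.map_map, hA, hB, Coprod.map_id_id, MonoidHom.id_apply]
  have hminj : Function.Injective m := fun z w hzw => by
    rw [← hid z, ← hid w, hzw]
  exact ⟨m.comp f, hminj.comp hf⟩

theorem two_ne {C : Type*} [Group C] [Nontrivial C]
    (h : 3 ≤ Nat.card C ∨ Nat.card C = 0) :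
    ∃ c c' : C, c ≠ 1 ∧ c' ≠ 1 ∧ c ≠ c' := by
  by_contra hc
  push_neg at hc
  obtain ⟨c, hcne⟩ := exists_ne (1 : C)
  have hall : ∀ x : C, x = 1 ∨ x = c := by
    intro x
    rcases eq_or_ne x 1 with hx | hx
    · exact Or.inl hx
    · exact Or.inr ((hc c x hcne hx).symm)
  have hsurj : Function.Surjective (![1, c] : Fin 2 → C) := by
    intro z
    rcases hall z with hz | hz
    · exact ⟨0, hz.symm⟩
    · exact ⟨1, hz.symm⟩
  have hfin : Finite C := Finite.of_surjective _ hsurj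
  have hle : Nat.card C ≤ 2 := by
    have h2 := Nat.card_le_card_of_surjective _ hsurj
    simpa using h2
  have hpos : Nat.card C ≠ 0 := Nat.card_ne_zero.mpr ⟨⟨1⟩, hfin⟩
  rcases h with h | h <;> omega

end FreeSubgroupAux

/-- The free product of two nontrivial groups, at least one of which has order
greater than `2` (possibly infinite), contains a nonabelian free subgroup:
there is an injective homomorphism from the free group of rank two into
`A * B`. -/
theorem free_subgroup_of_coprod
    {A B : Type*} [Group A] [Group B] [Nontrivial A] [Nontrivial B]
    (h : 3 ≤ Nat.card A ∨ Nat.card A = 0 ∨ 3 ≤ Nat.card B ∨ Nat.card B = 0) :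
    ∃ f : FreeGroup (Fin 2) →* Monoid.Coprod A B, Function.Injective f := by
  have hswap : (3 ≤ Nat.card B ∨ Nat.card B = 0) →
      ∃ f : FreeGroup (Fin 2) →* Monoid.Coprod A B, Function.Injective f := by
    intro hB
    obtain ⟨b, b', hb, hb', hbb⟩ := FreeSubgroupAux.two_ne hB
    obtain ⟨f, hf⟩ := FreeSubgroupAux.aux₂ (B := A) b b' hb hb' hbb
    exact ⟨(Monoid.Coprod.swap B A).comp f,
      (Monoid.Coprod.swap_injective (M := B) (N := A)).comp hf⟩
  rcases h with h | h | h | h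
  · obtain ⟨a, a', ha, ha', haa⟩ := FreeSubgroupAux.two_ne (Or.inl h)
    exact FreeSubgroupAux.aux₂ a a' ha ha' haa
  · obtain ⟨a, a', ha, ha', haa⟩ := FreeSubgroupAux.two_ne (Or.inr h)
    exact FreeSubgroupAux.aux₂ a a' ha ha' haa
  · exact hswap (Or.inl h)
  · exact hswap (Or.inr h)
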